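/- Let M = span(Φ) ⊆ ℂ[A] be an irreducible G-subrepresentation spanned by a set Φ of characters of A, fix χ ∈ Φ, and let H₀ := {h ∈ H : χ∘h = χ} be the stabilizer of χ in H. Let V := ℂ·χ ⊆ ℂ[A], which is a one-dimensional representation of the subgroup A ⋊ H₀ ≤ G under the restricted action. Then M is isomorphic as a G-representation to the induced representation Ind_{A⋊H₀}^{G}(V). -/

import Mathlib

noncomputable section

variable {A : Type*} [CommGroup A] [Fintype A]

/-- The semidirect product `G = A ⋊ H`, for `H` a subgroup of `Aut(A)`. -/
abbrev Gsd (H : Subgroup (MulAut A)) : Type _ := A ⋊[H.subtype] H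

/-- The `G`-representation on `ℂ[A] = (A → ℂ)`: `a₀ ∈ A` acts by `(a₀·f)(x) = f(x·a₀)` and
`h ∈ H` acts by `(h·f)(x) = f(h⁻¹ x)`. -/
def rho (H : Subgroup (MulAut A)) (g : Gsd H) : (A → ℂ) →ₗ[ℂ] (A → ℂ) where
  toFun f := fun x => f (((g.right : MulAut A))⁻¹ (x * g.left))
  map_add' _ _ := rfl
  map_smul' _ _ := rfl

/-- `M` is a `G`-subrepresentation of `ℂ[A]`. -/
def IsSubrep (H : Subgroup (MulAut A)) (M : Submodule ℂ (A → ℂ)) : Prop :=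
  ∀ (g : Gsd H) (f : A → ℂ), f ∈ M → rho H g f ∈ M

/-- `M` is an irreducible `G`-subrepresentation of `ℂ[A]`. -/
def IsIrred (H : Subgroup (MulAut A)) (M : Submodule ℂ (A → ℂ)) : Prop :=
  M ≠ ⊥ ∧ ∀ N : Submodule ℂ (A → ℂ), N ≤ M → IsSubrep H N → N = ⊥ ∨ N = M

/-- A character `χ : A →* ℂ` regarded as an element of `ℂ[A] = (A → ℂ)`. -/
def charFun (χ : A →* ℂ) : A → ℂ := fun a => χ a

/-- Membership in the concrete model of the induced representation
`Ind_{A⋊H₀}^{G}(ℂ·χ) = {F : G → ℂ | F(jg) = ψ(j)·F(g) for j ∈ A⋊H₀}`, where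
`H₀ = {h ∈ H : χ∘h = χ}` is the stabilizer of `χ` and `ψ(a·h) = χ(a)` is the character by
which `A ⋊ H₀` acts on the one-dimensional space `V = ℂ·χ`.  `G` acts on this space of
functions by right translation, `(g·F)(x) = F(xg)`. -/
def IndMem (H : Subgroup (MulAut A)) (χ : A →* ℂ) (F : Gsd H → ℂ) : Prop :=
  ∀ (a : A) (h : H), (∀ x : A, χ ((h : MulAut A) x) = χ x) →
    ∀ g : Gsd H,
      F (SemidirectProduct.inl a * SemidirectProduct.inr h * g) = χ a * F g

lemma rho_mul (H : Subgroup (MulAut A)) (x g : Gsd H) (f : A → ℂ) :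
    rho H (x * g) f = rho H x (rho H g f) := by
  funext y
  simp only [rho, LinearMap.coe_mk, AddHom.coe_mk, SemidirectProduct.mul_left,
    SemidirectProduct.mul_right, Subgroup.coe_mul, mul_inv_rev, MulAut.mul_apply,
    Subgroup.coe_subtype, map_mul, MulAut.inv_apply_self, mul_assoc]

lemma rho_one (H : Subgroup (MulAut A)) (f : A → ℂ) : rho H 1 f = f := by
  funext y
  simp [rho]

open Finset in
lemma char_sum_eq_zero (ψ : A →* ℂ) (b : A) (hb : ψ b ≠ 1) : ∑ x : A, ψ x = 0 := by
  have h : ψ b * ∑ x : A, ψ x = ∑ x : A, ψ x := by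
    rw [Finset.mul_sum]
    simp_rw [← map_mul]
    exact Fintype.sum_equiv (Equiv.mulLeft b) _ _ (fun x => rfl)
  have := sub_eq_zero.mpr h
  rw [← sub_one_mul] at this
  rcases mul_eq_zero.mp this with h' | h'
  · exact absurd (by linear_combination h') hb
  · exact h'

lemma char_ne_zero (χ : A →* ℂ) (a : A) : χ a ≠ 0 := by
  intro h
  have : χ a * χ a⁻¹ = 1 := by rw [← map_mul, mul_inv_cancel, map_one]
  rw [h, zero_mul] at this
  exact zero_ne_one this

open Classical in
lemma char_orth (χ μ : A →* ℂ) :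
    ∑ x : A, μ x * χ x⁻¹ = if (∀ x, μ x = χ x) then (Fintype.card A : ℂ) else 0 := by
  split_ifs with hcase
  · have : ∀ x : A, μ x * χ x⁻¹ = 1 := by
      intro x; rw [hcase x, ← map_mul, mul_inv_cancel, map_one]
    simp only [this, Finset.sum_const, Finset.card_univ, nsmul_eq_mul, mul_one]
  · push_neg at hcase
    obtain ⟨b, hb⟩ := hcase
    let ψ : A →* ℂ :=
      { toFun := fun a => μ a * χ a⁻¹
        map_one' := by simp
        map_mul' := fun a c => by
          simp only [map_mul, mul_inv_rev]
          ring }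
    have hψb : ψ b ≠ 1 := by
      intro h
      apply hb
      have h2 : χ b * χ b⁻¹ = 1 := by rw [← map_mul, mul_inv_cancel, map_one]
      have : μ b * χ b⁻¹ = χ b * χ b⁻¹ := by rw [h2]; exact h
      exact mul_right_cancel₀ (char_ne_zero χ b⁻¹) this
    exact char_sum_eq_zero ψ b hψb

def Lc (χ : A →* ℂ) : (A → ℂ) →ₗ[ℂ] ℂ where
  toFun f := (Fintype.card A : ℂ)⁻¹ * ∑ x : A, f x * χ x⁻¹
  map_add' f g := by
    simp only [Pi.add_apply, add_mul, Finset.sum_add_distrib, mul_add]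
  map_smul' c f := by
    simp only [Pi.smul_apply, smul_eq_mul, RingHom.id_apply, Finset.mul_sum]
    exact Finset.sum_congr rfl fun x _ => by ring

open Classical in
lemma Lc_char (χ μ : A →* ℂ) :
    Lc χ (fun x => μ x) = if (∀ x, μ x = χ x) then 1 else 0 := by
  have hA : (Fintype.card A : ℂ) ≠ 0 := by
    exact_mod_cast Fintype.card_ne_zero
  simp only [Lc, LinearMap.coe_mk, AddHom.coe_mk, char_orth χ μ]
  split_ifs
  · field_simp
  · simp

lemma Lc_rho_inl (H : Subgroup (MulAut A)) (χ : A →* ℂ) (a : A) (f : A → ℂ) :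
    Lc χ (rho H (SemidirectProduct.inl a) f) = χ a * Lc χ f := by
  simp only [Lc, rho, LinearMap.coe_mk, AddHom.coe_mk, SemidirectProduct.left_inl,
    SemidirectProduct.right_inl, OneMemClass.coe_one, inv_one, MulAut.one_apply]
  have key : ∑ x : A, f (x * a) * χ x⁻¹ = ∑ x : A, χ a * (f x * χ x⁻¹) := by
    refine Fintype.sum_equiv (Equiv.mulRight a) (fun x => f (x * a) * χ x⁻¹)
      (fun x => χ a * (f x * χ x⁻¹)) (fun x => ?_)
    simp only [Equiv.coe_mulRight]
    have : χ a * χ ((x * a)⁻¹) = χ x⁻¹ := by rw [← map_mul]; congr 1; group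
    rw [← this]; ring
  rw [key, ← Finset.mul_sum]
  ring

lemma Lc_rho_inr (H : Subgroup (MulAut A)) (χ : A →* ℂ) (h : H)
    (hstab : ∀ x : A, χ ((h : MulAut A) x) = χ x) (f : A → ℂ) :
    Lc χ (rho H (SemidirectProduct.inr h) f) = Lc χ f := by
  simp only [Lc, rho, LinearMap.coe_mk, AddHom.coe_mk, SemidirectProduct.left_inr,
    SemidirectProduct.right_inr, mul_one]
  congr 1
  refine Fintype.sum_equiv ((h : MulAut A)⁻¹).toEquiv
    (fun x => f (((h : MulAut A))⁻¹ x) * χ x⁻¹) (fun x => f x * χ x⁻¹) (fun x => ?_)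
  simp only [MulEquiv.toEquiv_eq_coe, EquivLike.coe_coe]
  congr 1
  rw [← map_inv]
  have h2 := hstab (((h : MulAut A))⁻¹ x⁻¹)
  rw [MulAut.apply_inv_self] at h2
  exact h2


/-- Let `M = span(Φ) ⊆ ℂ[A]` be an irreducible `G`-subrepresentation spanned by a
set `Φ` of characters, fix `χ ∈ Φ`, and let `H₀` be the stabilizer of `χ` in `H`.  Then `M` is
isomorphic as a `G`-representation to the induced representation `Ind_{A⋊H₀}^{G}(ℂ·χ)`:
there is an injective `ℂ`-linear map from `M` onto the realization
`{F : G → ℂ | F(jg) = ψ(j)F(g) for j ∈ A⋊H₀}` of the induced representation, intertwining the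
`G`-action on `M` with right translation. -/
theorem statement_3 (H : Subgroup (MulAut A)) (Φ : Finset (A →* ℂ)) (χ : A →* ℂ)
    (hχ : χ ∈ Φ) (M : Submodule ℂ (A → ℂ))
    (hMdef : M = Submodule.span ℂ (charFun '' ↑Φ))
    (hM : IsSubrep H M) (hMirr : IsIrred H M) :
    ∃ T : ↥M →ₗ[ℂ] (Gsd H → ℂ),
      Function.Injective T ∧
      (∀ m : ↥M, IndMem H χ (T m)) ∧
      (∀ F : Gsd H → ℂ, IndMem H χ F → ∃ m : ↥M, T m = F) ∧
      (∀ (g : Gsd H) (m m' : ↥M),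
        (m' : A → ℂ) = rho H g (m : A → ℂ) → T m' = fun x => T m (x * g)) := by
  classical
  haveI : Finite (MulAut A) :=
    Finite.of_injective (fun (e : MulAut A) => (e : A → A)) (fun e₁ e₂ h => by
      ext x; exact congrFun h x)
  haveI : Fintype ↥H := Fintype.ofFinite _
  -- The intertwiner
  set T : ↥M →ₗ[ℂ] (Gsd H → ℂ) :=
    { toFun := fun m => fun g => Lc χ (rho H g (m : A → ℂ))
      map_add' := fun m m' => by
        funext g
        simp only [Submodule.coe_add, map_add, Pi.add_apply]
      map_smul' := fun c m => by
        funext g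
        simp only [Submodule.coe_smul, map_smul, RingHom.id_apply, Pi.smul_apply] } with hTdef
  have hTapp : ∀ (m : ↥M) (g : Gsd H), T m g = Lc χ (rho H g (m : A → ℂ)) := fun _ _ => rfl
  -- χ as element of M
  have hχM : charFun χ ∈ M := by
    rw [hMdef]
    exact Submodule.subset_span ⟨χ, hχ, rfl⟩
  have hLχ : Lc χ (charFun χ) = 1 := by
    have h := Lc_char χ χ
    rw [if_pos (fun x => rfl)] at h
    exact h
  -- (ii) every T m satisfies IndMem
  have hT_ind : ∀ m : ↥M, IndMem H χ (T m) := by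
    intro m a h hstab g
    rw [hTapp, hTapp, rho_mul, rho_mul, Lc_rho_inl, Lc_rho_inr H χ h hstab]
  -- trivial stabilizer element
  have hstab1 : ∀ x : A, χ (((1 : ↥H) : MulAut A) x) = χ x := by
    intro x; simp
  -- reduction of equality to values at inr
  have hred : ∀ (F F' : Gsd H → ℂ), IndMem H χ F → IndMem H χ F' →
      (∀ h : ↥H, F (SemidirectProduct.inr h) = F' (SemidirectProduct.inr h)) → F = F' := by
    intro F F' hF hF' hval
    funext g
    have e1 := hF g.left 1 hstab1 (SemidirectProduct.inr g.right)
    have e2 := hF' g.left 1 hstab1 (SemidirectProduct.inr g.right)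
    simp only [map_one, mul_one, SemidirectProduct.inl_left_mul_inr_right] at e1 e2
    rw [e1, e2, hval]
  -- (i) injectivity
  have hinj : Function.Injective T := by
    set N : Submodule ℂ (A → ℂ) :=
      M ⊓ ⨅ g : Gsd H, LinearMap.ker ((Lc χ) ∘ₗ rho H g) with hNdef
    have hNM : N ≤ M := inf_le_left
    have hNsub : IsSubrep H N := by
      intro g f hf
      rw [hNdef, Submodule.mem_inf, Submodule.mem_iInf] at hf ⊢
      refine ⟨hM g f hf.1, fun g' => ?_⟩
      rw [LinearMap.mem_ker, LinearMap.comp_apply, ← rho_mul]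
      have := hf.2 (g' * g)
      rwa [LinearMap.mem_ker, LinearMap.comp_apply] at this
    have hNne : N ≠ M := by
      intro hNM'
      have : charFun χ ∈ N := hNM' ▸ hχM
      rw [hNdef, Submodule.mem_inf, Submodule.mem_iInf] at this
      have h1 := this.2 1
      rw [LinearMap.mem_ker, LinearMap.comp_apply, rho_one, hLχ] at h1
      exact one_ne_zero h1
    have hNbot : N = ⊥ := (hMirr.2 N hNM hNsub).resolve_right hNne
    intro m m' hmm'
    have hsub : ((m : A → ℂ) - (m' : A → ℂ)) ∈ N := by
      rw [hNdef, Submodule.mem_inf, Submodule.mem_iInf]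
      refine ⟨Submodule.sub_mem M m.2 m'.2, fun g => ?_⟩
      rw [LinearMap.mem_ker, LinearMap.comp_apply, map_sub, map_sub]
      have := congrFun hmm' g
      rw [hTapp, hTapp] at this
      rw [this, sub_self]
    rw [hNbot, Submodule.mem_bot, sub_eq_zero] at hsub
    exact Subtype.ext hsub
  refine ⟨T, hinj, hT_ind, ?_, ?_⟩
  · -- surjectivity onto IndMem functions
    intro F hF
    set P : ↥H → Prop := fun h₀ => ∀ x : A, χ ((h₀ : MulAut A) x) = χ x with hPdef
    set stab : Finset ↥H := Finset.univ.filter P with hstabdef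
    have h1mem : (1 : ↥H) ∈ stab := by
      rw [hstabdef, Finset.mem_filter]
      exact ⟨Finset.mem_univ _, hstab1⟩
    have hncard : (stab.card : ℂ) ≠ 0 := by
      exact_mod_cast Finset.card_ne_zero_of_mem h1mem
    set mval : A → ℂ :=
      ((stab.card : ℂ))⁻¹ • ∑ k : ↥H,
        F (SemidirectProduct.inr k) • rho H (SemidirectProduct.inr k⁻¹) (charFun χ) with hmval
    have hmM : mval ∈ M := by
      refine Submodule.smul_mem M _ (Submodule.sum_mem M fun k _ => ?_)
      exact Submodule.smul_mem M _ (hM _ _ hχM)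
    refine ⟨⟨mval, hmM⟩, ?_⟩
    -- compute T mval at inr h
    have hval : ∀ h : ↥H, T ⟨mval, hmM⟩ (SemidirectProduct.inr h) = F (SemidirectProduct.inr h) := by
      intro h
      rw [hTapp]
      have hterm : ∀ k : ↥H,
          Lc χ (rho H (SemidirectProduct.inr h) (rho H (SemidirectProduct.inr k⁻¹) (charFun χ)))
            = if P (k * h⁻¹) then 1 else 0 := by
        intro k
        rw [← rho_mul, ← map_mul]
        have hrw : rho H (SemidirectProduct.inr (h * k⁻¹)) (charFun χ)
            = fun x => (χ.comp (MulEquiv.toMonoidHom ((k * h⁻¹ : ↥H) : MulAut A))) x := by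
          funext x
          simp only [rho, charFun, LinearMap.coe_mk, AddHom.coe_mk,
            SemidirectProduct.left_inr, SemidirectProduct.right_inr, mul_one,
            MonoidHom.coe_comp, MulEquiv.coe_toMonoidHom, Function.comp_apply]
          have hco : ((h * k⁻¹ : ↥H) : MulAut A)⁻¹ = ((k * h⁻¹ : ↥H) : MulAut A) := by
            rw [← Subgroup.coe_inv]
            congr 1
          rw [hco]
        rw [hrw, Lc_char]
        congr 1
      simp only [hmval, map_smul, map_sum, smul_eq_mul]
      simp only [hterm, smul_eq_mul, mul_ite, mul_one, mul_zero]
      have hre : ∑ k : ↥H, (if P (k * h⁻¹) then F (SemidirectProduct.inr k) else 0)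
          = ∑ h₀ : ↥H, (if P h₀ then F (SemidirectProduct.inr h) else 0) := by
        refine Fintype.sum_equiv (Equiv.mulRight h⁻¹)
          (fun k => if P (k * h⁻¹) then F (SemidirectProduct.inr k) else 0)
          (fun h₀ => if P h₀ then F (SemidirectProduct.inr h) else 0) (fun k => ?_)
        simp only [Equiv.coe_mulRight]
        by_cases hp : P (k * h⁻¹)
        · rw [if_pos hp]
          refine Eq.trans ?_ (if_pos hp).symm
          have := hF 1 (k * h⁻¹) hp (SemidirectProduct.inr h)
          rw [map_one, one_mul, map_one, one_mul, ← map_mul, inv_mul_cancel_right] at this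
          exact this
        · rw [if_neg hp]
          exact (if_neg hp).symm
      rw [hre, ← Finset.sum_filter, ← hstabdef, Finset.sum_const, nsmul_eq_mul]
      rw [← mul_assoc, inv_mul_cancel₀ hncard, one_mul]
    exact hred _ _ (hT_ind _) hF hval
  · -- intertwining
    intro g m m' hm'
    funext x
    rw [hTapp, hTapp, hm', ← rho_mul]
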